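/- Let K be a complete nonarchimedean field of characteristic zero with residue characteristic p, equipped with a bounded derivation ∂, and set ω = p^{−1/(p−1)} if p > 0 and ω = 1 if p = 0. Then for each positive integer n, the operator norm of ∂ⁿ/n! on K satisfies |∂ⁿ/n!|_K ≤ ω^{−n} |∂|_{sp,K}ⁿ. In particular (n = 1), |∂|_{sp,K} ≥ ω |∂|_K. -/

import Mathlib

open Filter

/-- The operator norm of a map `f : K → K` on a normed field. -/
noncomputable def opNorm {K : Type*} [NormedField K] (f : K → K) : ℝ :=
  ⨆ x : {x : K // x ≠ 0}, ‖f x.1‖ / ‖x.1‖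

/-- The spectral norm `|∂|_{sp,K} = lim_n |∂ⁿ|_K^{1/n}` (as a `limsup`, which equals
the limit when the limit exists). -/
noncomputable def spectralNorm' {K : Type*} [NormedField K] (d : K → K) : ℝ :=
  limsup (fun n : ℕ => (opNorm (d^[n])) ^ ((n : ℝ)⁻¹)) atTop

section UltraAux

variable {K : Type*} [NormedField K] [IsUltrametricDist K]

lemma aux_norm_sum_lt {B : ℝ} (hB : 0 < B) (s : Finset ℕ) (f : ℕ → K)
    (h : ∀ i ∈ s, ‖f i‖ < B) : ‖∑ i ∈ s, f i‖ < B := by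
  classical
  induction s using Finset.induction_on with
  | empty => simpa using hB
  | @insert a t ha ih =>
    rw [Finset.sum_insert ha]
    refine lt_of_le_of_lt (IsUltrametricDist.norm_add_le_max _ _)
      (max_lt (h a (by simp)) (ih fun i hi => h i (by simp [hi])))

lemma aux_norm_sum_eq (s : Finset ℕ) (f : ℕ → K) (i0 : ℕ) (hi0 : i0 ∈ s)
    (hpos : 0 < ‖f i0‖) (h : ∀ i ∈ s, i ≠ i0 → ‖f i‖ < ‖f i0‖) :
    ‖∑ i ∈ s, f i‖ = ‖f i0‖ := by
  classical
  rw [← Finset.add_sum_erase s f hi0]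
  have hw : ‖∑ i ∈ s.erase i0, f i‖ < ‖f i0‖ :=
    aux_norm_sum_lt hpos _ f fun i hi =>
      h i (Finset.mem_of_mem_erase hi) (Finset.ne_of_mem_erase hi)
  rw [IsUltrametricDist.norm_add_eq_max_of_norm_ne_norm (ne_of_gt hw)]
  exact max_eq_left hw.le

end UltraAux

section DerivAux

variable {K : Type*} [NormedField K] (d : K → K)

lemma aux_d_zero (hadd : ∀ a b : K, d (a + b) = d a + d b) : d 0 = 0 := by
  have h := hadd 0 0
  rw [add_zero] at h
  exact (add_eq_left.mp h.symm)

lemma aux_iter_add (hadd : ∀ a b : K, d (a + b) = d a + d b) (k : ℕ) :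
    ∀ a b : K, d^[k] (a + b) = d^[k] a + d^[k] b := by
  induction k with
  | zero => simp
  | succ k ih =>
    intro a b
    rw [Function.iterate_succ_apply', Function.iterate_succ_apply',
      Function.iterate_succ_apply', ih, hadd]

lemma aux_iter_zero (hadd : ∀ a b : K, d (a + b) = d a + d b) (k : ℕ) : d^[k] 0 = 0 := by
  induction k with
  | zero => simp
  | succ k ih => rw [Function.iterate_succ_apply', ih, aux_d_zero d hadd]

lemma aux_leibniz (hadd : ∀ a b : K, d (a + b) = d a + d b)
    (hmul : ∀ a b : K, d (a * b) = d a * b + a * d b) (k : ℕ) (x y : K) :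
    d^[k] (x * y) = ∑ i ∈ Finset.range (k + 1),
      (k.choose i : K) * (d^[i] x * d^[k - i] y) := by
  induction k generalizing x y with
  | zero => simp
  | succ k ih =>
    have h1 : d^[k + 1] (x * y) = d^[k] (d x * y) + d^[k] (x * d y) := by
      rw [Function.iterate_succ_apply, hmul, aux_iter_add d hadd]
    rw [h1, ih, ih]
    have e1 : ∑ i ∈ Finset.range (k + 1), (k.choose i : K) * (d^[i] (d x) * d^[k - i] y)
        = ∑ i ∈ Finset.range (k + 1), (k.choose i : K) * (d^[i + 1] x * d^[k - i] y) :=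
      Finset.sum_congr rfl fun i _ => by rw [← Function.iterate_succ_apply]
    have e2 : ∑ i ∈ Finset.range (k + 1), (k.choose i : K) * (d^[i] x * d^[k - i] (d y))
        = ∑ i ∈ Finset.range (k + 1), (k.choose i : K) * (d^[i] x * d^[k + 1 - i] y) := by
      refine Finset.sum_congr rfl fun i hi => ?_
      have hik : i ≤ k := by
        have := Finset.mem_range.mp hi; omega
      have hs : k + 1 - i = (k - i) + 1 := by omega
      rw [hs, Function.iterate_succ_apply]
    rw [e1, e2]
    have key : ∑ i ∈ Finset.range (k + 1 + 1), ((k + 1).choose i : K) * (d^[i] x * d^[k + 1 - i] y)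
        = (∑ i ∈ Finset.range (k + 1), (k.choose i : K) * (d^[i + 1] x * d^[k - i] y))
          + ∑ i ∈ Finset.range (k + 1), (k.choose i : K) * (d^[i] x * d^[k + 1 - i] y) := by
      rw [Finset.sum_range_succ']
      have e3 : ∀ i ∈ Finset.range (k + 1),
          ((k + 1).choose (i + 1) : K) * (d^[i + 1] x * d^[k + 1 - (i + 1)] y)
          = (k.choose i : K) * (d^[i + 1] x * d^[k - i] y)
            + (k.choose (i + 1) : K) * (d^[i + 1] x * d^[k + 1 - (i + 1)] y) := by
        intro i hi
        rw [Nat.choose_succ_succ, Nat.cast_add, add_mul, Nat.succ_sub_succ]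
      rw [Finset.sum_congr rfl e3, Finset.sum_add_distrib, add_assoc]
      congr 1
      have e4 := Finset.sum_range_succ' (fun i => (k.choose i : K) * (d^[i] x * d^[k + 1 - i] y)) (k + 1)
      have e5 := Finset.sum_range_succ (fun i => (k.choose i : K) * (d^[i] x * d^[k + 1 - i] y)) (k + 1)
      rw [e5] at e4
      have e6 : (k.choose (k + 1) : K) * (d^[k + 1] x * d^[k + 1 - (k + 1)] y) = 0 := by
        rw [Nat.choose_eq_zero_of_lt (by omega)]
        simp
      rw [e6, add_zero] at e4
      have e7 : ∀ i, k + 1 - (i + 1) = k - i := fun i => by omega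
      simp only [e7] at e4 ⊢
      simp only [Nat.choose_zero_right, Nat.cast_one, one_mul, Function.iterate_zero_apply,
        Nat.sub_zero] at e4 ⊢
      exact e4.symm
    rw [key]

lemma aux_dleibniz [CharZero K]
    (hleib : ∀ (k : ℕ) (x y : K), d^[k] (x * y) = ∑ i ∈ Finset.range (k + 1),
      (k.choose i : K) * (d^[i] x * d^[k - i] y)) (k : ℕ) (x y : K) :
    ((k.factorial : K))⁻¹ * d^[k] (x * y)
      = ∑ i ∈ Finset.range (k + 1),
          (((i.factorial : K))⁻¹ * d^[i] x) * ((((k - i).factorial : K))⁻¹ * d^[k - i] y) := by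
  rw [hleib, Finset.mul_sum]
  refine Finset.sum_congr rfl fun i hi => ?_
  have hik : i ≤ k := by have := Finset.mem_range.mp hi; omega
  have hfac : ((k.choose i : ℕ) : K) * ((i.factorial : K) * (((k - i).factorial : K)))
      = (k.factorial : K) := by
    rw [← Nat.cast_mul, ← Nat.cast_mul]
    exact_mod_cast congrArg (Nat.cast (R := K))
      (by rw [← Nat.choose_mul_factorial_mul_factorial hik]; ring)
  have h1 : ((i.factorial : K)) ≠ 0 := Nat.cast_ne_zero.mpr (Nat.factorial_ne_zero i)
  have h2 : (((k - i).factorial : K)) ≠ 0 := Nat.cast_ne_zero.mpr (Nat.factorial_ne_zero _)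
  have h3 : ((k.factorial : K)) ≠ 0 := Nat.cast_ne_zero.mpr (Nat.factorial_ne_zero k)
  field_simp
  rw [← hfac]
  ring

end DerivAux

/-- Corollary (`C:bound using spectral norm`): for a complete nonarchimedean field
`K` of characteristic zero and residue characteristic `p` (norm normalized so that
`|p| = 1/p` when `p > 0`), equipped with a bounded derivation `∂`, one has
`|∂ⁿ/n!|_K ≤ ω^{−n} |∂|_{sp,K}ⁿ` for all `n ≥ 1`, where `ω = p^{−1/(p−1)}` if
`p > 0` and `ω = 1` if `p = 0`; in particular `|∂|_{sp,K} ≥ ω |∂|_K`. -/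
theorem factorial_deriv_opNorm_le
    (K : Type*) [NormedField K] [CompleteSpace K] [IsUltrametricDist K] [CharZero K]
    (p : ℕ) (hp : p = 0 ∨ p.Prime)
    (hres0 : p = 0 → ∀ m : ℕ, m ≠ 0 → ‖(m : K)‖ = 1)
    (hresp : p ≠ 0 → ‖(p : K)‖ = (p : ℝ)⁻¹)
    (hresq : p ≠ 0 → ∀ q : ℕ, q.Prime → q ≠ p → ‖(q : K)‖ = 1)
    (d : K → K) (hadd : ∀ a b : K, d (a + b) = d a + d b)
    (hmul : ∀ a b : K, d (a * b) = d a * b + a * d b)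
    (hbdd : ∃ c : ℝ, ∀ x : K, ‖d x‖ ≤ c * ‖x‖)
    (ω : ℝ) (hω : ω = if p = 0 then 1 else (p : ℝ) ^ (-(1 : ℝ) / ((p : ℝ) - 1))) :
    (∀ n : ℕ, 1 ≤ n →
        opNorm (fun x => ((n.factorial : K))⁻¹ * d^[n] x) ≤ ω⁻¹ ^ n * (spectralNorm' d) ^ n) ∧
    ω * opNorm d ≤ spectralNorm' d := by
  classical
  haveI hnon : Nonempty {x : K // x ≠ 0} := ⟨⟨1, one_ne_zero⟩⟩
  obtain ⟨c, hc⟩ := hbdd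
  set c' : ℝ := max c 1 with hc'def
  have hc'1 : 1 ≤ c' := le_max_right _ _
  have hc'0 : 0 ≤ c' := by linarith
  have hcb : ∀ x : K, ‖d x‖ ≤ c' * ‖x‖ := fun x =>
    (hc x).trans (mul_le_mul_of_nonneg_right (le_max_left _ _) (norm_nonneg x))
  have hiterb : ∀ (k : ℕ) (x : K), ‖d^[k] x‖ ≤ c' ^ k * ‖x‖ := by
    intro k
    induction k with
    | zero => intro x; simp
    | succ k ih =>
      intro x
      rw [Function.iterate_succ_apply']
      calc ‖d (d^[k] x)‖ ≤ c' * ‖d^[k] x‖ := hcb _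
        _ ≤ c' * (c' ^ k * ‖x‖) := mul_le_mul_of_nonneg_left (ih x) hc'0
        _ = c' ^ (k + 1) * ‖x‖ := by ring
  set a : ℕ → ℝ := fun k => opNorm (d^[k]) with hadef
  have hbdda : ∀ k : ℕ, BddAbove (Set.range fun x : {x : K // x ≠ 0} => ‖d^[k] x.1‖ / ‖x.1‖) := by
    intro k
    refine ⟨c' ^ k, ?_⟩
    rintro _ ⟨x, rfl⟩
    rw [div_le_iff₀ (norm_pos_iff.mpr x.2)]
    exact hiterb k x.1
  have haub : ∀ (k : ℕ) (x : K), ‖d^[k] x‖ ≤ a k * ‖x‖ := by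
    intro k x
    rcases eq_or_ne x 0 with rfl | hx
    · simp [aux_iter_zero d hadd k]
    · have h1 : ‖d^[k] x‖ / ‖x‖ ≤ a k := le_ciSup (hbdda k) ⟨x, hx⟩
      rwa [div_le_iff₀ (norm_pos_iff.mpr hx)] at h1
  have hanneg : ∀ k, 0 ≤ a k := by
    intro k
    apply Real.iSup_nonneg
    intro x
    positivity
  have hak : ∀ k : ℕ, a k ≤ c' ^ k := by
    intro k
    refine ciSup_le fun x => ?_
    rw [div_le_iff₀ (norm_pos_iff.mpr x.2)]
    exact hiterb k x.1
  have ha0 : a 0 = 1 := by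
    show opNorm (d^[0]) = 1
    unfold opNorm
    rw [show (fun x : {x : K // x ≠ 0} => ‖(d^[0]) x.1‖ / ‖x.1‖) = fun _ => (1 : ℝ) from
      funext fun x => by simp [div_self (norm_ne_zero_iff.mpr x.2)]]
    exact ciSup_const
  -- ω facts
  have hω0 : 0 < ω ∧ ω ≤ 1 := by
    rcases hp with rfl | hpp
    · rw [hω]; norm_num
    · have hp0 : p ≠ 0 := hpp.ne_zero
      have hp1 : (1 : ℝ) < (p : ℝ) := by exact_mod_cast hpp.one_lt
      rw [hω, if_neg hp0]
      constructor
      · exact Real.rpow_pos_of_pos (by linarith) _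
      · apply Real.rpow_le_one_of_one_le_of_nonpos (by linarith)
        apply div_nonpos_of_nonpos_of_nonneg <;> linarith
  obtain ⟨hωpos, hωle1⟩ := hω0
  -- norm of factorials
  have hfact : ∀ i : ℕ, ω ^ i ≤ ‖((i.factorial : ℕ) : K)‖ := by
    rcases hp with rfl | hpp
    · intro i
      rw [hres0 rfl _ (Nat.factorial_ne_zero i), hω, if_pos rfl, one_pow]
    · haveI : Fact p.Prime := ⟨hpp⟩
      have hp0 : p ≠ 0 := hpp.ne_zero
      have hp1 : 1 < p := hpp.one_lt
      have hpR : (1 : ℝ) < (p : ℝ) := by exact_mod_cast hp1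
      have hpRpos : (0 : ℝ) < (p : ℝ) := by linarith
      have hnorm : ∀ m : ℕ, m ≠ 0 → ‖(m : K)‖ = ((p : ℝ)⁻¹) ^ (padicValNat p m) := by
        intro m
        induction m using Nat.strong_induction_on with
        | _ m ih =>
          intro hm
          rcases eq_or_lt_of_le (Nat.one_le_iff_ne_zero.mpr hm) with h1 | h2
          · rw [← h1]; simp
          · have hq : m.minFac.Prime := Nat.minFac_prime (by omega)
            have hdvd : m.minFac ∣ m := Nat.minFac_dvd m
            have hq0 : m.minFac ≠ 0 := hq.ne_zero
            have hm' : m / m.minFac ≠ 0 := by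
              have := Nat.div_pos (Nat.minFac_le (by omega)) hq.pos
              omega
            have hmeq : m = m.minFac * (m / m.minFac) := (Nat.mul_div_cancel' hdvd).symm
            have hm'lt : m / m.minFac < m := Nat.div_lt_self (by omega) hq.one_lt
            have hnq : ‖(m.minFac : K)‖ = ((p : ℝ)⁻¹) ^ (padicValNat p m.minFac) := by
              rcases eq_or_ne m.minFac p with hqp | hqp
              · rw [hqp, hresp hp0, padicValNat.self hp1, pow_one]
              · rw [hresq hp0 _ hq hqp, padicValNat.eq_zero_of_not_dvd, pow_zero]
                intro hdv
                exact hqp ((Nat.prime_dvd_prime_iff_eq hpp hq).mp hdv).symm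
            calc ‖(m : K)‖ = ‖((m.minFac * (m / m.minFac) : ℕ) : K)‖ := by rw [← hmeq]
              _ = ‖(m.minFac : K)‖ * ‖((m / m.minFac : ℕ) : K)‖ := by
                  rw [Nat.cast_mul, norm_mul]
              _ = ((p : ℝ)⁻¹) ^ (padicValNat p m.minFac)
                    * ((p : ℝ)⁻¹) ^ (padicValNat p (m / m.minFac)) := by
                  rw [hnq, ih _ hm'lt hm']
              _ = ((p : ℝ)⁻¹) ^ (padicValNat p m) := by
                  have hvm := padicValNat.mul (p := p) hq0 hm'
                  rw [← hmeq] at hvm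
                  rw [← pow_add, ← hvm]
      intro i
      rw [hnorm _ (Nat.factorial_ne_zero i)]
      set v := padicValNat p (i.factorial) with hvdef
      have hleg : (p - 1) * v ≤ i := by
        rw [hvdef, sub_one_mul_padicValNat_factorial]
        exact Nat.sub_le _ _
      have hP1 : (0 : ℝ) < (p : ℝ) - 1 := by linarith
      have h9 : (((p - 1 : ℕ)) : ℝ) = (p : ℝ) - 1 := by
        rw [Nat.cast_sub hp1.le, Nat.cast_one]
      have hlegR : ((p : ℝ) - 1) * (v : ℝ) ≤ (i : ℝ) := by
        rw [← h9, ← Nat.cast_mul]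
        exact_mod_cast hleg
      have e1 : ((p : ℝ)⁻¹) ^ v = (p : ℝ) ^ (-(v : ℝ)) := by
        rw [inv_pow, ← Real.rpow_natCast (p : ℝ) v, ← Real.rpow_neg hpRpos.le]
      have e2 : ω ^ i = (p : ℝ) ^ ((-(1 : ℝ) / ((p : ℝ) - 1)) * (i : ℝ)) := by
        rw [hω, if_neg hp0, ← Real.rpow_natCast ((p : ℝ) ^ (-(1 : ℝ) / ((p : ℝ) - 1))) i,
          ← Real.rpow_mul hpRpos.le]
      rw [e1, e2]
      rw [Real.rpow_le_rpow_left_iff hpR]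
      rw [neg_div, neg_mul, neg_le_neg_iff, div_mul_eq_mul_div, one_mul, le_div_iff₀ hP1]
      linarith
  -- spectral norm facts
  set s : ℝ := spectralNorm' d with hsdef
  have hsform : s = limsup (fun n : ℕ => (a n) ^ ((n : ℝ)⁻¹)) atTop := rfl
  have hub : ∀ k : ℕ, (a k) ^ ((k : ℝ)⁻¹) ≤ c' := by
    intro k
    rcases Nat.eq_zero_or_pos k with rfl | hk
    · simpa using hc'1
    · have hk0 : k ≠ 0 := by omega
      calc (a k) ^ ((k : ℝ)⁻¹) ≤ (c' ^ k) ^ ((k : ℝ)⁻¹) :=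
          Real.rpow_le_rpow (hanneg k) (hak k) (by positivity)
        _ = c' := Real.pow_rpow_inv_natCast hc'0 hk0
  have hsbdd : IsBoundedUnder (· ≤ ·) atTop (fun n : ℕ => (a n) ^ ((n : ℝ)⁻¹)) :=
    isBoundedUnder_of ⟨c', fun k => hub k⟩
  have hs0 : 0 ≤ s := by
    rw [hsform]
    exact le_limsup_of_frequently_le
      (Frequently.of_forall fun k => Real.rpow_nonneg (hanneg k) _) hsbdd
  have hev : ∀ u : ℝ, s < u → ∀ᶠ k in atTop, a k ≤ u ^ k := by
    intro u hu
    rw [hsform] at hu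
    have h1 := eventually_lt_of_limsup_lt hu hsbdd
    filter_upwards [h1, eventually_ge_atTop 1] with k hk hk1
    have hk0 : k ≠ 0 := by omega
    calc a k = ((a k) ^ ((k : ℝ)⁻¹)) ^ k := (Real.rpow_inv_natCast_pow (hanneg k) hk0).symm
      _ ≤ u ^ k := pow_le_pow_left₀ (Real.rpow_nonneg (hanneg k) _) hk.le k
  -- divided powers
  set D : ℕ → K → K := fun k x => ((k.factorial : K))⁻¹ * d^[k] x with hDdef
  have hD0 : ∀ x : K, D 0 x = x := fun x => by simp [hDdef]
  have hDzero : ∀ k, D k 0 = 0 := fun k => by simp [hDdef, aux_iter_zero d hadd k]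
  have hDnorm : ∀ (k : ℕ) (x : K), ‖D k x‖ ≤ ‖((k.factorial : K))‖⁻¹ * (a k * ‖x‖) := by
    intro k x
    show ‖((k.factorial : K))⁻¹ * d^[k] x‖ ≤ _
    rw [norm_mul, norm_inv]
    exact mul_le_mul_of_nonneg_left (haub k x) (by positivity)
  have hDleib : ∀ (k : ℕ) (x y : K),
      D k (x * y) = ∑ i ∈ Finset.range (k + 1), D i x * D (k - i) y :=
    fun k x y => aux_dleibniz d (aux_leibniz d hadd hmul) k x y
  -- core isometry lemma
  have core : ∀ r : ℝ, 0 < r →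
      Tendsto (fun i : ℕ => ‖((i.factorial : K))‖⁻¹ * a i * r ^ i) atTop (nhds 0) →
      ∀ (n : ℕ) (x : K), ‖D n x‖ * r ^ n ≤ ‖x‖ := by
    intro r hr htend n x
    rcases eq_or_ne x 0 with rfl | hx
    · simp [hDzero]
    set t : ℕ → ℝ := fun i => ‖((i.factorial : K))‖⁻¹ * a i * r ^ i with htdef
    have htnn : ∀ i, 0 ≤ t i := fun i => by
      have := hanneg i
      positivity
    have hCbdd : BddAbove (Set.range t) := htend.bddAbove_range
    set C : ℝ := ⨆ i, t i with hCdef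
    have htC : ∀ i, t i ≤ C := fun i => le_ciSup hCbdd i
    set g : K → ℕ → ℝ := fun z i => ‖D i z‖ * r ^ i with hgdef
    have hgnn : ∀ z i, 0 ≤ g z i := fun z i => by
      simp only [hgdef]
      positivity
    have hgt : ∀ z i, g z i ≤ t i * ‖z‖ := by
      intro z i
      have h1 := hDnorm i z
      have h2 : (0:ℝ) ≤ r ^ i := by positivity
      calc ‖D i z‖ * r ^ i ≤ (‖((i.factorial : K))‖⁻¹ * (a i * ‖z‖)) * r ^ i :=
          mul_le_mul_of_nonneg_right h1 h2
        _ = t i * ‖z‖ := by simp only [htdef]; ring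
    have hgbdd : ∀ z : K, BddAbove (Set.range (g z)) := by
      intro z
      refine ⟨C * ‖z‖, ?_⟩
      rintro _ ⟨i, rfl⟩
      exact (hgt z i).trans (mul_le_mul_of_nonneg_right (htC i) (norm_nonneg z))
    set M : K → ℝ := fun z => ⨆ i, g z i with hMdef
    have hMle : ∀ z i, g z i ≤ M z := fun z i => le_ciSup (hgbdd z) i
    have hMz : ∀ z : K, ‖z‖ ≤ M z := by
      intro z
      have h := hMle z 0
      have h0 : g z 0 = ‖z‖ := by simp [hgdef, hD0]
      rwa [h0] at h
    have hMC : ∀ z : K, M z ≤ C * ‖z‖ := fun z =>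
      ciSup_le fun i => (hgt z i).trans (mul_le_mul_of_nonneg_right (htC i) (norm_nonneg z))
    have hattain : ∀ z : K, z ≠ 0 → ∃ i0, g z i0 = M z ∧ ∀ i, i0 < i → g z i < M z := by
      intro z hz
      have hz0 : 0 < ‖z‖ := norm_pos_iff.mpr hz
      have htz : Tendsto (g z) atTop (nhds 0) := by
        apply squeeze_zero (hgnn z) (hgt z)
        simpa using htend.mul_const ‖z‖
      obtain ⟨N, hN⟩ := eventually_atTop.mp (htz.eventually_lt_const hz0)
      set N' := max N 1 with hN'def
      obtain ⟨j0, hj0mem, hj0max⟩ :=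
        Finset.exists_max_image (Finset.range N') (g z) ⟨0, Finset.mem_range.mpr (by omega)⟩
      have hgle : ∀ i, g z i ≤ g z j0 := by
        intro i
        by_cases hiN : i < N'
        · exact hj0max i (Finset.mem_range.mpr hiN)
        · have h1 : N ≤ i := by omega
          have h2 : g z i < ‖z‖ := hN i h1
          have h3 : ‖z‖ = g z 0 := by simp [hgdef, hD0]
          exact le_trans h2.le (h3 ▸ hj0max 0 (Finset.mem_range.mpr (by omega)))
      have hMj0 : M z = g z j0 := le_antisymm (ciSup_le hgle) (hMle z j0)
      set S := (Finset.range N').filter (fun i => g z i = M z) with hSdef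
      have hSne : S.Nonempty := ⟨j0, Finset.mem_filter.mpr ⟨hj0mem, hMj0.symm⟩⟩
      refine ⟨S.max' hSne, (Finset.mem_filter.mp (S.max'_mem hSne)).2, ?_⟩
      intro i hi
      rcases lt_or_ge (g z i) (M z) with h | h
      · exact h
      exfalso
      have hgi : g z i = M z := le_antisymm (hMle z i) h
      have hiN : i < N' := by
        by_contra hcon
        have h1 : N ≤ i := by omega
        have h2 : g z i < ‖z‖ := hN i h1
        have h3 := hMz z
        rw [hgi] at h2
        linarith
      exact absurd (S.le_max' i (Finset.mem_filter.mpr ⟨Finset.mem_range.mpr hiN, hgi⟩))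
        (not_le.mpr hi)
    have hmulM : ∀ z w : K, z ≠ 0 → w ≠ 0 → M z * M w ≤ M (z * w) := by
      intro z w hz hw
      obtain ⟨i0, hi0, hi0max⟩ := hattain z hz
      obtain ⟨j0, hj0, hj0max⟩ := hattain w hw
      have hMzpos : 0 < M z := lt_of_lt_of_le (norm_pos_iff.mpr hz) (hMz z)
      have hMwpos : 0 < M w := lt_of_lt_of_le (norm_pos_iff.mpr hw) (hMz w)
      set k0 := i0 + j0 with hk0def
      have hrk : (0 : ℝ) < r ^ k0 := by positivity
      have escale : ∀ i, i ≤ k0 → ‖D i z * D (k0 - i) w‖ * r ^ k0 = g z i * g w (k0 - i) := by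
        intro i hik
        have hsplit : r ^ k0 = r ^ i * r ^ (k0 - i) := by
          rw [← pow_add]
          congr 1
          omega
        rw [norm_mul, hsplit]
        simp only [hgdef]
        ring
      have hterm : ‖D i0 z * D (k0 - i0) w‖ * r ^ k0 = M z * M w := by
        rw [escale i0 (by omega)]
        have hj : k0 - i0 = j0 := by omega
        rw [hj, hi0, hj0]
      have hpos0 : 0 < ‖D i0 z * D (k0 - i0) w‖ := by
        by_contra hcn
        push_neg at hcn
        have h0 : ‖D i0 z * D (k0 - i0) w‖ = 0 := le_antisymm hcn (norm_nonneg _)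
        rw [h0, zero_mul] at hterm
        nlinarith
      have hnorm : ‖D k0 (z * w)‖ = ‖D i0 z * D (k0 - i0) w‖ := by
        rw [hDleib k0 z w]
        apply aux_norm_sum_eq _ _ i0 (Finset.mem_range.mpr (by omega)) hpos0
        intro i hii hnei
        have hik : i ≤ k0 := by have := Finset.mem_range.mp hii; omega
        rw [← mul_lt_mul_iff_left₀ hrk, escale i hik, hterm]
        rcases lt_or_gt_of_ne hnei with hlt | hgt
        · have h2 : g w (k0 - i) < M w := hj0max _ (by omega)
          calc g z i * g w (k0 - i) ≤ M z * g w (k0 - i) :=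
              mul_le_mul_of_nonneg_right (hMle z i) (hgnn w _)
            _ < M z * M w := (mul_lt_mul_iff_right₀ hMzpos).mpr h2
        · have h1 : g z i < M z := hi0max i hgt
          calc g z i * g w (k0 - i) ≤ g z i * M w :=
              mul_le_mul_of_nonneg_left (hMle w _) (hgnn z i)
            _ < M z * M w := (mul_lt_mul_iff_left₀ hMwpos).mpr h1
      have hfin : M z * M w = g (z * w) k0 := by
        show M z * M w = ‖D k0 (z * w)‖ * r ^ k0
        rw [hnorm, hterm]
      exact le_trans (le_of_eq hfin) (hMle (z * w) k0)
    have hxn0 : ∀ m : ℕ, x ^ m ≠ 0 := fun m => pow_ne_zero m hx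
    have hMpow : ∀ m : ℕ, 1 ≤ m → M x ^ m ≤ M (x ^ m) := by
      intro m hm
      induction m with
      | zero => omega
      | succ m ih =>
        rcases Nat.eq_zero_or_pos m with rfl | hm1
        · simpa using le_refl (M x)
        · have h1 : M x ^ (m + 1) = M x ^ m * M x := by ring
          have h2 : M x ^ m * M x ≤ M (x ^ m) * M x :=
            mul_le_mul_of_nonneg_right (ih hm1) (le_trans (norm_nonneg x) (hMz x))
          have h3 : M (x ^ m) * M x ≤ M (x ^ m * x) := hmulM _ _ (hxn0 m) hx
          have h4 : x ^ m * x = x ^ (m + 1) := by ring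
          rw [h1, ← h4]
          exact le_trans h2 h3
    have hMx : M x ≤ ‖x‖ := by
      by_contra hcon
      push_neg at hcon
      have hxpos : 0 < ‖x‖ := norm_pos_iff.mpr hx
      have hratio : 1 < M x / ‖x‖ := (one_lt_div hxpos).mpr hcon
      obtain ⟨m, hm⟩ := pow_unbounded_of_one_lt C hratio
      have hm1 : 1 ≤ m := by
        by_contra h
        have hm0 : m = 0 := by omega
        rw [hm0, pow_zero] at hm
        have hC1 : 1 ≤ C := by
          refine le_trans ?_ (htC 0)
          simp [htdef, ha0]
        linarith
      have h1 : M x ^ m ≤ C * ‖x‖ ^ m := by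
        calc M x ^ m ≤ M (x ^ m) := hMpow m hm1
          _ ≤ C * ‖x ^ m‖ := hMC _
          _ = C * ‖x‖ ^ m := by rw [norm_pow]
      have h2 : (M x / ‖x‖) ^ m ≤ C := by
        rw [div_pow, div_le_iff₀ (by positivity)]
        linarith
      linarith
    calc ‖D n x‖ * r ^ n = g x n := rfl
      _ ≤ M x := hMle x n
      _ ≤ ‖x‖ := hMx
  -- main estimate
  have main : ∀ (n : ℕ) (x : K), ‖D n x‖ ≤ (ω⁻¹ * s) ^ n * ‖x‖ := by
    intro n x
    have step : ∀ q : ℝ, ω⁻¹ * s < q → ‖D n x‖ ≤ q ^ n * ‖x‖ := by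
      intro q hq
      have hq0 : 0 < q := lt_of_le_of_lt (by positivity) hq
      have hsq : s < ω * q := by
        have h1 := (mul_lt_mul_iff_right₀ hωpos).mpr hq
        rwa [show ω * (ω⁻¹ * s) = s by field_simp] at h1
      have hωq : 0 < ω * q := by positivity
      set u : ℝ := max ((s + ω * q) / 2) (ω * q / 2) with hudef
      have hu1 : s < u := lt_of_lt_of_le (by linarith) (le_max_left _ _)
      have hu2 : u < ω * q := max_lt (by linarith) (by linarith)
      have hu0 : 0 ≤ u := le_trans (by positivity) (le_max_right _ _)
      have hρ1 : (0:ℝ) ≤ u / (ω * q) := by positivity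
      have hρ2 : u / (ω * q) < 1 := (div_lt_one hωq).mpr hu2
      set r : ℝ := q⁻¹ with hrdef
      have hr0 : 0 < r := by positivity
      have htend : Tendsto (fun i : ℕ => ‖((i.factorial : K))‖⁻¹ * a i * r ^ i)
          atTop (nhds 0) := by
        apply squeeze_zero' (Eventually.of_forall fun i => by
            have := hanneg i
            positivity)
          ?_ (tendsto_pow_atTop_nhds_zero_of_lt_one hρ1 hρ2)
        filter_upwards [hev u hu1] with i hi
        have hfp : (0:ℝ) < ω ^ i := by positivity
        have h1 : ‖((i.factorial : K))‖⁻¹ ≤ (ω ^ i)⁻¹ := by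
          apply inv_anti₀ hfp (hfact i)
        have h2 : ‖((i.factorial : K))‖⁻¹ * a i ≤ (ω ^ i)⁻¹ * u ^ i :=
          mul_le_mul h1 hi (hanneg i) (by positivity)
        have h3 : ‖((i.factorial : K))‖⁻¹ * a i * r ^ i ≤ (ω ^ i)⁻¹ * u ^ i * r ^ i :=
          mul_le_mul_of_nonneg_right h2 (by positivity)
        refine h3.trans (le_of_eq ?_)
        rw [hrdef, div_pow, mul_pow, inv_pow]
        field_simp
      have hcore := core r hr0 htend n x
      have hrq : r ^ n * q ^ n = 1 := by
        rw [hrdef, ← mul_pow, inv_mul_cancel₀ (ne_of_gt hq0), one_pow]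
      calc ‖D n x‖ = ‖D n x‖ * (r ^ n * q ^ n) := by rw [hrq, mul_one]
        _ = (‖D n x‖ * r ^ n) * q ^ n := by ring
        _ ≤ ‖x‖ * q ^ n := mul_le_mul_of_nonneg_right hcore (by positivity)
        _ = q ^ n * ‖x‖ := mul_comm _ _
    have hlim : Tendsto (fun k : ℕ => (ω⁻¹ * s + ((k : ℝ) + 1)⁻¹) ^ n * ‖x‖) atTop
        (nhds ((ω⁻¹ * s) ^ n * ‖x‖)) := by
      have h1 : Tendsto (fun k : ℕ => ω⁻¹ * s + ((k : ℝ) + 1)⁻¹) atTop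
          (nhds (ω⁻¹ * s + 0)) :=
        tendsto_const_nhds.add
          (tendsto_one_div_add_atTop_nhds_zero_nat.congr fun k => (one_div _))
      have h2 := (h1.pow n).mul_const ‖x‖
      simpa using h2
    refine ge_of_tendsto' hlim fun k => step _ ?_
    have : (0 : ℝ) < ((k : ℝ) + 1)⁻¹ := by positivity
    linarith
  have part1 : ∀ n : ℕ, 1 ≤ n →
      opNorm (fun x => ((n.factorial : K))⁻¹ * d^[n] x) ≤ ω⁻¹ ^ n * s ^ n := by
    intro n _
    have hb : ∀ x : {x : K // x ≠ 0},
        ‖((n.factorial : K))⁻¹ * d^[n] x.1‖ / ‖x.1‖ ≤ ω⁻¹ ^ n * s ^ n := by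
      rintro ⟨x, hx⟩
      rw [div_le_iff₀ (norm_pos_iff.mpr hx)]
      calc ‖((n.factorial : K))⁻¹ * d^[n] x‖ = ‖D n x‖ := rfl
        _ ≤ (ω⁻¹ * s) ^ n * ‖x‖ := main n x
        _ = ω⁻¹ ^ n * s ^ n * ‖x‖ := by rw [mul_pow]
    exact ciSup_le hb
  refine ⟨part1, ?_⟩
  have h1 := part1 1 le_rfl
  have h2 : (fun x : K => ((Nat.factorial 1 : K))⁻¹ * d^[1] x) = d := by
    funext z
    simp [Nat.factorial]
  rw [h2] at h1
  have h3 : opNorm d ≤ ω⁻¹ * s := by simpa using h1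
  calc ω * opNorm d ≤ ω * (ω⁻¹ * s) := mul_le_mul_of_nonneg_left h3 hωpos.le
    _ = s := by field_simp
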